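/- For every z ∈ (−1,1), one has ∫_{−1}^{1} w · log( (√(1−z²)·√(1−w²) + 1 − z·w) / |z−w| ) dw = (π/2)·z·√(1−z²). -/

import Mathlib

open Real

lemma log_intervalIntegrable_univ (a b : ℝ) :
    IntervalIntegrable Real.log MeasureTheory.volume a b := by
  suffices h : ∀ c : ℝ, IntervalIntegrable Real.log MeasureTheory.volume 0 c by
    exact (h a).symm.trans (h b)
  have hpos : ∀ c : ℝ, 0 < c → IntervalIntegrable Real.log MeasureTheory.volume 0 c := by
    intro c hc
    have h01 : IntervalIntegrable Real.log MeasureTheory.volume 0 1 := by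
      rw [intervalIntegrable_iff_integrableOn_Ioc_of_le zero_le_one]
      have hder : ∀ x ∈ Set.Ioo (0:ℝ) 1,
          HasDerivAt (fun x : ℝ => x - x * Real.log x) (-Real.log x) x := by
        intro x hx
        have := (hasDerivAt_id x).sub (Real.hasDerivAt_mul_log hx.1.ne')
        refine this.congr_deriv ?_; ring
      have hint : MeasureTheory.IntegrableOn (fun x => -Real.log x) (Set.Ioc (0:ℝ) 1) :=
        intervalIntegral.integrableOn_deriv_of_nonneg
          (continuous_id.sub Real.continuous_mul_log).continuousOn hder
          (fun x hx => by simpa only [neg_nonneg] using Real.log_nonpos hx.1.le hx.2.le)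
      have h2 := hint.neg
      refine h2.congr ?_
      filter_upwards with x
      simp
    rcases le_or_gt c 1 with hc1 | hc1
    · have h1c : IntervalIntegrable Real.log MeasureTheory.volume 1 c :=
        intervalIntegral.intervalIntegrable_log (by
          rw [Set.uIcc_of_ge hc1]
          rintro ⟨h1, h2⟩; linarith)
      exact h01.trans h1c
    · have h1c : IntervalIntegrable Real.log MeasureTheory.volume 1 c :=
        intervalIntegral.intervalIntegrable_log (by
          rw [Set.uIcc_of_le hc1.le]
          rintro ⟨h1, h2⟩; linarith)
      exact h01.trans h1c
  intro c
  rcases lt_trichotomy c 0 with hc | hc | hc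
  · rw [IntervalIntegrable.iff_comp_neg]
    simp only [Real.log_neg_eq_log, neg_zero]
    exact hpos (-c) (by linarith)
  · simp [hc]
  · exact hpos c hc

noncomputable def auxF (z s : ℝ) : ℝ → ℝ := fun w =>
  ((w ^ 2 - z ^ 2) / 2) * Real.log (s * Real.sqrt (1 - w ^ 2) + 1 - z * w)
  + ((w + z) / 2) * ((z - w) * Real.log (z - w))
  + (s * z / 2) * Real.arcsin w
  - (s / 2) * Real.sqrt (1 - w ^ 2)

/-- For every `z ∈ (−1,1)`,
`∫_{−1}^{1} w·log((√(1−z²)√(1−w²) + 1 − zw)/|z−w|) dw = (π/2)·z·√(1−z²)`. -/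
theorem defNLS_second_NDR_vacuum_condensate (z : ℝ) (hz : z ∈ Set.Ioo (-1 : ℝ) 1) :
    (∫ w in (-1 : ℝ)..1,
        w * Real.log ((Real.sqrt (1 - z ^ 2) * Real.sqrt (1 - w ^ 2) + 1 - z * w) / |z - w|))
      = (π / 2) * z * Real.sqrt (1 - z ^ 2) := by
  obtain ⟨hz1, hz2⟩ := hz
  set s : ℝ := Real.sqrt (1 - z ^ 2) with hsdef
  have h1z : (0:ℝ) < 1 - z ^ 2 := by nlinarith
  have hs : 0 < s := Real.sqrt_pos.mpr h1z
  have hs2 : s ^ 2 = 1 - z ^ 2 := Real.sq_sqrt h1z.le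
  -- positivity of G on [-1,1]
  have hGpos : ∀ w ∈ Set.Icc (-1:ℝ) 1, 0 < s * Real.sqrt (1 - w ^ 2) + 1 - z * w := by
    intro w hw
    have h1 : 0 ≤ Real.sqrt (1 - w ^ 2) := Real.sqrt_nonneg _
    have h2 : 0 < 1 - z * w := by
      have habsz : |z| < 1 := abs_lt.mpr ⟨hz1, hz2⟩
      have : z * w ≤ |z| := by
        calc z * w ≤ |z * w| := le_abs_self _
        _ = |z| * |w| := abs_mul z w
        _ ≤ |z| * 1 := by
            exact mul_le_mul_of_nonneg_left (abs_le.mpr ⟨hw.1, hw.2⟩) (abs_nonneg z)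
        _ = |z| := mul_one _
      linarith
    nlinarith [mul_nonneg hs.le h1]
  have hcont_logG : ContinuousOn
      (fun w => Real.log (s * Real.sqrt (1 - w ^ 2) + 1 - z * w)) (Set.Icc (-1:ℝ) 1) := by
    apply ContinuousOn.log
    · fun_prop
    · intro w hw; exact (hGpos w hw).ne'
  set g : ℝ → ℝ := fun w =>
    w * Real.log (s * Real.sqrt (1 - w ^ 2) + 1 - z * w) - w * Real.log (z - w) with hgdef
  -- integrability of g
  have hlogzw : IntervalIntegrable (fun w => Real.log (z - w)) MeasureTheory.volume (-1) 1 := by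
    simpa using (log_intervalIntegrable_univ (z + 1) (z - 1)).comp_sub_left z
  have hgint : IntervalIntegrable g MeasureTheory.volume (-1) 1 := by
    apply IntervalIntegrable.sub
    · have : ContinuousOn
          (fun w => w * Real.log (s * Real.sqrt (1 - w ^ 2) + 1 - z * w))
          (Set.uIcc (-1:ℝ) 1) := by
        rw [Set.uIcc_of_le (by norm_num : (-1:ℝ) ≤ 1)]
        exact continuousOn_id.mul hcont_logG
      exact this.intervalIntegrable
    · have := hlogzw.continuousOn_mul (g := fun w : ℝ => w) (by fun_prop)
      exact this
  -- continuity of auxF on [-1,1]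
  have hFc : ContinuousOn (auxF z s) (Set.Icc (-1:ℝ) 1) := by
    unfold auxF
    apply ContinuousOn.sub
    apply ContinuousOn.add
    apply ContinuousOn.add
    · exact (by fun_prop : ContinuousOn (fun w : ℝ => (w ^ 2 - z ^ 2) / 2) _).mul hcont_logG
    · apply Continuous.continuousOn
      exact (by fun_prop : Continuous fun w : ℝ => (w + z) / 2).mul
        (Real.continuous_mul_log.comp (continuous_const.sub continuous_id))
    · exact (continuous_const.mul Real.continuous_arcsin).continuousOn
    · fun_prop
  -- derivative of auxF
  have hFd : ∀ w, -1 < w → w < 1 → w ≠ z → HasDerivAt (auxF z s) (g w) w := by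
    intro w hw1 hw2 hwz
    have h1w : 0 < 1 - w ^ 2 := by nlinarith
    have hG : 0 < s * Real.sqrt (1 - w ^ 2) + 1 - z * w := hGpos w ⟨hw1.le, hw2.le⟩
    set r : ℝ := Real.sqrt (1 - w ^ 2) with hrdef
    have hr : 0 < r := Real.sqrt_pos.mpr h1w
    have hr2 : r ^ 2 = 1 - w ^ 2 := Real.sq_sqrt h1w.le
    have hzw : z - w ≠ 0 := sub_ne_zero.mpr (Ne.symm hwz)
    have hsqrt : HasDerivAt (fun x : ℝ => Real.sqrt (1 - x ^ 2)) (-w / r) w := by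
      have h := (Real.hasDerivAt_sqrt h1w.ne').comp w ((hasDerivAt_pow 2 w).const_sub 1)
      refine h.congr_deriv ?_
      rw [← hrdef]
      field_simp
      ring
    have hGd : HasDerivAt (fun x : ℝ => s * Real.sqrt (1 - x ^ 2) + 1 - z * x)
        (s * (-w / r) - z) w := by
      have h := ((hsqrt.const_mul s).add_const 1).sub ((hasDerivAt_id w).const_mul z)
      refine h.congr_deriv ?_
      ring
    have hlogG : HasDerivAt (fun x => Real.log (s * Real.sqrt (1 - x ^ 2) + 1 - z * x))
        ((s * (-w / r) - z) / (s * r + 1 - z * w)) w := hGd.log hG.ne'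
    have hp : HasDerivAt (fun x : ℝ => (x ^ 2 - z ^ 2) / 2) w w := by
      have := ((hasDerivAt_pow 2 w).sub_const (z ^ 2)).div_const 2
      refine this.congr_deriv ?_
      push_cast; ring
    have hT1 := hp.mul hlogG
    have hmul_log : HasDerivAt (fun x : ℝ => (z - x) * Real.log (z - x))
        (-(Real.log (z - w) + 1)) w := by
      have h := (Real.hasDerivAt_mul_log hzw).comp w ((hasDerivAt_id w).const_sub z)
      refine h.congr_deriv ?_
      ring
    have hq : HasDerivAt (fun x : ℝ => (x + z) / 2) (1 / 2 : ℝ) w :=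
      ((hasDerivAt_id w).add_const z).div_const 2
    have hT2 := hq.mul hmul_log
    have hT3 := (Real.hasDerivAt_arcsin hw1.ne' hw2.ne).const_mul (s * z / 2)
    rw [← hrdef] at hT3
    have hT4 := hsqrt.const_mul (s / 2)
    have hsum := ((hT1.add hT2).add hT3).sub hT4
    have key : ((w ^ 2 - z ^ 2) / 2) * ((s * (-w / r) - z) / (s * r + 1 - z * w))
        = (w + z) / 2 - (s * z / 2) * (1 / r) - (s / 2) * (w / r) := by
      have poly : (w ^ 2 - z ^ 2) * (s * (-w) - z * r)
          = ((w + z) * r - s * z - s * w) * (s * r + 1 - z * w) := by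
        linear_combination ((w + z) * r) * hs2 - ((w + z) * s) * hr2
      field_simp
      rw [div_eq_iff (by linarith)]
      linear_combination poly
    refine hsum.congr_deriv ?_
    rw [hgdef]
    simp only
    rw [← hrdef, key]
    ring
  -- split the integral for g at z and apply FTC
  have hsub1 : Set.uIcc (-1:ℝ) z ⊆ Set.uIcc (-1:ℝ) 1 := by
    apply Set.uIcc_subset_uIcc Set.left_mem_uIcc
    rw [Set.uIcc_of_le (by norm_num : (-1:ℝ) ≤ 1)]
    exact ⟨hz1.le, hz2.le⟩
  have hsub2 : Set.uIcc z (1:ℝ) ⊆ Set.uIcc (-1:ℝ) 1 := by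
    apply Set.uIcc_subset_uIcc _ Set.right_mem_uIcc
    rw [Set.uIcc_of_le (by norm_num : (-1:ℝ) ≤ 1)]
    exact ⟨hz1.le, hz2.le⟩
  have hi1 : IntervalIntegrable g MeasureTheory.volume (-1) z := hgint.mono_set hsub1
  have hi2 : IntervalIntegrable g MeasureTheory.volume z 1 := hgint.mono_set hsub2
  have e1 : (∫ w in (-1:ℝ)..z, g w) = auxF z s z - auxF z s (-1) := by
    apply intervalIntegral.integral_eq_sub_of_hasDerivAt_of_le hz1.le
      (hFc.mono (Set.Icc_subset_Icc le_rfl hz2.le))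
      (fun x hx => hFd x hx.1 (lt_trans hx.2 hz2) hx.2.ne) hi1
  have e2 : (∫ w in z..(1:ℝ), g w) = auxF z s 1 - auxF z s z := by
    apply intervalIntegral.integral_eq_sub_of_hasDerivAt_of_le hz2.le
      (hFc.mono (Set.Icc_subset_Icc hz1.le le_rfl))
      (fun x hx => hFd x (lt_trans hz1 hx.1) hx.2 hx.1.ne') hi2
  have hsplit := intervalIntegral.integral_add_adjacent_intervals hi1 hi2
  -- the original integrand agrees a.e. with g
  have hcongr : (∫ w in (-1:ℝ)..1,
      w * Real.log ((s * Real.sqrt (1 - w ^ 2) + 1 - z * w) / |z - w|))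
      = ∫ w in (-1:ℝ)..1, g w := by
    apply intervalIntegral.integral_congr_ae
    have hzae : ∀ᵐ x : ℝ, x ≠ z := by
      have h0 : MeasureTheory.volume ({z} : Set ℝ) = 0 := MeasureTheory.measure_singleton z
      have := MeasureTheory.measure_eq_zero_iff_ae_notMem.mp h0
      filter_upwards [this] with x hx
      simpa using hx
    filter_upwards [hzae] with x hx hxmem
    rw [Set.uIoc_of_le (by norm_num : (-1:ℝ) ≤ 1)] at hxmem
    have hGx := hGpos x ⟨hxmem.1.le, hxmem.2⟩
    have habs : |z - x| ≠ 0 := abs_ne_zero.mpr (sub_ne_zero.mpr (Ne.symm hx))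
    rw [hgdef]
    simp only
    rw [Real.log_div hGx.ne' habs, Real.log_abs]
    ring
  -- endpoint values
  have hF1 : auxF z s 1 = s * z * (π / 4) := by
    have h0 : (1:ℝ) - 1 ^ 2 = 0 := by norm_num
    have hlog : Real.log (z - 1) = Real.log (1 - z) := by
      rw [← Real.log_abs, abs_of_neg (by linarith : z - 1 < 0)]
      ring_nf
    unfold auxF
    rw [h0, Real.sqrt_zero, Real.arcsin_one, hlog]
    ring_nf
  have hFm1 : auxF z s (-1) = -(s * z * (π / 4)) := by
    have h0 : (1:ℝ) - (-1) ^ 2 = 0 := by norm_num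
    unfold auxF
    rw [h0, Real.sqrt_zero, Real.arcsin_neg_one]
    ring_nf
  rw [hcongr, ← hsplit, e1, e2, hF1, hFm1]
  ring
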